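/- For every parameter h ∈ [0, 1/2], the diffusion coefficient of the lifted negative Bernoulli shift map exists and is the linear function lim_{n→∞} (1/(2n)) ∫_0^1 (W_h^n(x) − x)² dx = h. -/

import Mathlib

open Filter

/-- The lifted negative Bernoulli shift map `W_h`. -/
noncomputable def liftW (h x : ℝ) : ℝ :=
  if Int.fract x < 1/2 then (⌊x⌋ : ℝ) + (-2 * Int.fract x + 1 + h)
  else (⌊x⌋ : ℝ) + (-2 * Int.fract x + 2 - h)

set_option maxHeartbeats 2000000

namespace Bern

open MeasureTheory intervalIntegral Set

noncomputable def P (h x : ℝ) : ℝ :=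
  if Int.fract x < h then 3/2 * Int.fract x
  else if Int.fract x ≤ 1 - h then 3/2 * (Int.fract x - 1/2)
  else 3/2 * (Int.fract x - 1)

noncomputable def S (h : ℝ) (n : ℕ) (x : ℝ) : ℝ := (liftW h)^[n] x - x

lemma liftW_def (h x : ℝ) : liftW h x =
    (x - Int.fract x) + (if Int.fract x < 1/2 then (-2 * Int.fract x + 1 + h)
      else (-2 * Int.fract x + 2 - h)) := by
  unfold liftW
  rcases lt_or_ge (Int.fract x) (1/2) with hc | hc
  · rw [if_pos hc, if_pos hc, Int.self_sub_fract]
  · rw [if_neg (not_lt.2 hc), if_neg (not_lt.2 hc), Int.self_sub_fract]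

lemma measurable_liftW (h : ℝ) : Measurable (liftW h) := by
  have : liftW h = fun x => (x - Int.fract x) + (if Int.fract x < 1/2 then (-2 * Int.fract x + 1 + h)
      else (-2 * Int.fract x + 2 - h)) := funext fun x => liftW_def h x
  rw [this]
  apply (measurable_id.sub measurable_fract).add
  exact Measurable.ite (measurableSet_lt measurable_fract measurable_const)
    (((measurable_fract.const_mul (-2)).add_const 1).add_const h)
    (((measurable_fract.const_mul (-2)).add_const 2).sub_const h)

lemma measurable_P (h : ℝ) : Measurable (P h) := by
  unfold P
  apply Measurable.ite (measurableSet_lt measurable_fract measurable_const)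
    (measurable_fract.const_mul _)
  exact Measurable.ite (measurableSet_le measurable_fract measurable_const)
    ((measurable_fract.sub_const _).const_mul _)
    ((measurable_fract.sub_const _).const_mul _)

variable {h : ℝ}

lemma g_bound (h0 : 0 ≤ h) (h2 : h ≤ 1/2) (x : ℝ) : |liftW h x - x| ≤ 2 := by
  have f0 := Int.fract_nonneg x
  have f1 := Int.fract_lt_one x
  rw [liftW_def, abs_le]
  split_ifs <;> constructor <;> nlinarith

lemma P_bound (h0 : 0 ≤ h) (h2 : h ≤ 1/2) (x : ℝ) : |P h x| ≤ 2 := by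
  have f0 := Int.fract_nonneg x
  have f1 := Int.fract_lt_one x
  unfold P
  split_ifs <;> rw [abs_le] <;> constructor <;> nlinarith

lemma liftW_add_one (x : ℝ) : liftW h (x + 1) = liftW h x + 1 := by
  rw [liftW_def, liftW_def, Int.fract_add_one]
  split_ifs <;> ring

lemma P_add_one (x : ℝ) : P h (x + 1) = P h x := by
  unfold P
  rw [Int.fract_add_one]

lemma iter_add_one (n : ℕ) (x : ℝ) : (liftW h)^[n] (x + 1) = (liftW h)^[n] x + 1 := by
  induction n generalizing x with
  | zero => simp
  | succ n ih => rw [Function.iterate_succ_apply, Function.iterate_succ_apply, liftW_add_one, ih]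

lemma S_add_one (n : ℕ) (x : ℝ) : S h n (x + 1) = S h n x := by
  unfold S; rw [iter_add_one]; ring

lemma S_succ (n : ℕ) (x : ℝ) : S h (n + 1) x = (liftW h x - x) + S h n (liftW h x) := by
  unfold S; rw [Function.iterate_succ_apply]; ring

lemma measurable_S (n : ℕ) : Measurable (S h n) :=
  ((measurable_liftW h).iterate n).sub measurable_id

lemma S_bound (h0 : 0 ≤ h) (h2 : h ≤ 1/2) (n : ℕ) (x : ℝ) : |S h n x| ≤ 2 * n := by
  induction n generalizing x with
  | zero => simp [S]
  | succ n ih =>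
    rw [S_succ]
    calc |(liftW h x - x) + S h n (liftW h x)| ≤ |liftW h x - x| + |S h n (liftW h x)| :=
          abs_add_le _ _
      _ ≤ 2 + 2 * n := add_le_add (g_bound h0 h2 x) (ih _)
      _ = 2 * (n + 1 : ℕ) := by push_cast; ring

lemma liftW_eq1 (hx0 : 0 ≤ x) (hx : x < 1/2) : liftW h x = -2*x + (1+h) := by
  have hf : Int.fract x = x := Int.fract_eq_self.2 ⟨hx0, by linarith⟩
  rw [liftW_def, hf, if_pos hx]; ring

lemma liftW_eq2 (hx0 : 1/2 ≤ x) (hx : x < 1) : liftW h x = -2*x + (2-h) := by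
  have hf : Int.fract x = x := Int.fract_eq_self.2 ⟨by linarith, hx⟩
  rw [liftW_def, hf, if_neg (not_lt.2 hx0)]; ring

lemma P_eq1 (hx0 : 0 ≤ x) (hx : x < h) (hx1 : x < 1) : P h x = 3/2 * x := by
  have hf : Int.fract x = x := Int.fract_eq_self.2 ⟨hx0, hx1⟩
  unfold P; rw [hf, if_pos hx]

lemma P_eq2 (hx0 : 0 ≤ x) (hxh : h ≤ x) (hx1 : x ≤ 1 - h) (hlt : x < 1) :
    P h x = 3/2 * (x - 1/2) := by
  have hf : Int.fract x = x := Int.fract_eq_self.2 ⟨hx0, hlt⟩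
  unfold P; rw [hf, if_neg (not_lt.2 hxh), if_pos hx1]

lemma P_eq3 (hx0 : 1 - h < x) (hlt : x < 1) (h2 : h ≤ 1/2) : P h x = 3/2 * (x - 1) := by
  have hf : Int.fract x = x := Int.fract_eq_self.2 ⟨by linarith, hlt⟩
  unfold P; rw [hf, if_neg (not_lt.2 (by linarith)), if_neg (not_le.2 hx0)]

lemma ae_ne (b : ℝ) : ∀ᵐ x : ℝ ∂volume, x ≠ b := by
  rw [MeasureTheory.ae_iff]
  simp only [ne_eq, not_not, setOf_eq_eq_singleton]
  exact measure_singleton b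

lemma IIg {f : ℝ → ℝ} (hm : Measurable f) {C : ℝ} (hC : ∀ x, |f x| ≤ C) (a b : ℝ) :
    IntervalIntegrable f volume a b := by
  rw [intervalIntegrable_iff]
  refine MeasureTheory.Integrable.mono' (g := fun _ => C) ?_ hm.aestronglyMeasurable.restrict
    (ae_of_all _ fun x => by simpa [Real.norm_eq_abs] using hC x)
  exact integrableOn_const (by exact measure_Ioc_lt_top.ne)

lemma IIaff {f : ℝ → ℝ} (hm : Measurable f) {C : ℝ} (hC : ∀ x, |f x| ≤ C) (p q : ℝ)
    {u v : ℝ} (hu1 : -1 ≤ u) (hu2 : u ≤ 2) (hv1 : -1 ≤ v) (hv2 : v ≤ 2) :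
    IntervalIntegrable (fun y => (p*y+q) * f y) volume u v := by
  have hC0 : 0 ≤ C := le_trans (abs_nonneg _) (hC 0)
  rw [intervalIntegrable_iff]
  refine MeasureTheory.Integrable.mono' (g := fun _ => (2*|p|+|q|)*C) ?_
    (((measurable_id.const_mul p).add_const q).mul hm).aestronglyMeasurable.restrict ?_
  · exact integrableOn_const (by exact measure_Ioc_lt_top.ne)
  · refine (ae_restrict_iff' measurableSet_uIoc).2 (ae_of_all _ fun x hx => ?_)
    have hx2 : |x| ≤ 2 := by
      rcases hx with ⟨hxa, hxb⟩
      have hmin : (-1:ℝ) ≤ u ⊓ v := le_inf hu1 hv1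
      have hmax : u ⊔ v ≤ 2 := sup_le hu2 hv2
      rw [abs_le]
      exact ⟨by linarith, by linarith⟩
    have h1 : |p*x+q| ≤ 2*|p|+|q| := by
      have e1 : |p*x+q| ≤ |p*x| + |q| := abs_add_le _ _
      have e2 : |p*x| = |p| * |x| := abs_mul _ _
      nlinarith [abs_nonneg p, abs_nonneg q]
    show ‖(p*x+q) * f x‖ ≤ (2*|p|+|q|) * C
    calc ‖(p*x+q) * f x‖ = |p*x+q| * |f x| := by rw [Real.norm_eq_abs, abs_mul]
      _ ≤ (2*|p|+|q|) * C := mul_le_mul h1 (hC x) (abs_nonneg _) (by positivity)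

lemma master (f : ℝ → ℝ) (α β a b d : ℝ) :
    (∫ x in a..b, (α*x+β) * f (-2*x+d)) =
      1/2 * ∫ y in (-2*b+d)..(-2*a+d), ((-α/2)*y + (α*d/2+β)) * f y := by
  have key := integral_comp_mul_add (a := a) (b := b)
    (f := fun y => ((-α/2)*y + (α*d/2+β)) * f y) (by norm_num : (-2:ℝ) ≠ 0) d
  calc (∫ x in a..b, (α*x+β) * f (-2*x+d))
      = ∫ x in a..b, ((-α/2)*(-2*x+d) + (α*d/2+β)) * f (-2*x+d) :=
        integral_congr (fun x _ => by ring)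
    _ = (-2:ℝ)⁻¹ • ∫ y in (-2*a+d)..(-2*b+d), ((-α/2)*y + (α*d/2+β)) * f y := key
    _ = 1/2 * ∫ y in (-2*b+d)..(-2*a+d), ((-α/2)*y + (α*d/2+β)) * f y := by
        rw [integral_symm]
        simp only [smul_eq_mul]
        ring

lemma IIid {f : ℝ → ℝ} (hm : Measurable f) {C : ℝ} (hC : ∀ x, |f x| ≤ C)
    {u v : ℝ} (hu1 : -1 ≤ u) (hu2 : u ≤ 2) (hv1 : -1 ≤ v) (hv2 : v ≤ 2) :
    IntervalIntegrable (fun y => y * f y) volume u v := by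
  have := IIaff hm hC 1 0 hu1 hu2 hv1 hv2
  simpa using this

lemma Lsplit {f : ℝ → ℝ} (hm : Measurable f) {C : ℝ} (hC : ∀ x, |f x| ≤ C) (p q : ℝ)
    {u v : ℝ} (hu1 : -1 ≤ u) (hu2 : u ≤ 2) (hv1 : -1 ≤ v) (hv2 : v ≤ 2) :
    ∫ y in u..v, (p*y+q) * f y = p * (∫ y in u..v, y * f y) + q * (∫ y in u..v, f y) := by
  have hid : IntervalIntegrable (fun y => y * f y) volume u v := IIid hm hC hu1 hu2 hv1 hv2
  have h1 : IntervalIntegrable (fun y => p * (y * f y)) volume u v := hid.const_mul p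
  have h2 : IntervalIntegrable (fun y => q * f y) volume u v := (IIg hm hC u v).const_mul q
  calc ∫ y in u..v, (p*y+q) * f y = ∫ y in u..v, (p * (y * f y) + q * f y) :=
        integral_congr (fun x _ => by ring)
    _ = (∫ y in u..v, p * (y * f y)) + ∫ y in u..v, q * f y := integral_add h1 h2
    _ = p * (∫ y in u..v, y * f y) + q * (∫ y in u..v, f y) := by
        rw [intervalIntegral.integral_const_mul, intervalIntegral.integral_const_mul]

lemma intpoly (c2 c1 c0 a b : ℝ) : ∫ x in a..b, (c2*x^2 + c1*x + c0) =
    c2*(b^3-a^3)/3 + c1*(b^2-a^2)/2 + c0*(b-a) := by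
  have i2 : IntervalIntegrable (fun x => c2*x^2) volume a b :=
    (continuous_const.mul (continuous_pow 2)).intervalIntegrable a b
  have i1 : IntervalIntegrable (fun x => c1*x) volume a b :=
    (continuous_const.mul continuous_id).intervalIntegrable a b
  have i0 : IntervalIntegrable (fun _ : ℝ => c0) volume a b :=
    intervalIntegrable_const
  rw [integral_add (i2.add i1) i0, integral_add i2 i1, intervalIntegral.integral_const_mul,
    intervalIntegral.integral_const_mul, integral_pow, integral_id, intervalIntegral.integral_const, smul_eq_mul]
  push_cast
  ring

lemma T1 (h0 : 0 ≤ h) (h2 : h ≤ 1/2) {f : ℝ → ℝ} (hm : Measurable f) {C : ℝ}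
    (hC : ∀ x, |f x| ≤ C) (hp : ∀ x, f (x + 1) = f x) :
    (∫ x in (0:ℝ)..1, f (liftW h x)) = ∫ x in (0:ℝ)..1, f x := by
  have hfW : Measurable fun x => f (liftW h x) := hm.comp (measurable_liftW h)
  have hWC : ∀ x, |f (liftW h x)| ≤ C := fun x => hC _
  have split : (∫ x in (0:ℝ)..1, f (liftW h x)) =
      (∫ x in (0:ℝ)..(h/2), f (liftW h x)) + (∫ x in (h/2)..(1/2:ℝ), f (liftW h x)) +
      ((∫ x in (1/2:ℝ)..(1-h/2), f (liftW h x)) + ∫ x in (1-h/2)..(1:ℝ), f (liftW h x)) := by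
    rw [integral_add_adjacent_intervals (IIg hfW hWC _ _) (IIg hfW hWC _ _),
        integral_add_adjacent_intervals (IIg hfW hWC _ _) (IIg hfW hWC _ _),
        integral_add_adjacent_intervals (IIg hfW hWC _ _) (IIg hfW hWC _ _)]
  have p1 : (∫ x in (0:ℝ)..(h/2), f (liftW h x)) =
      ∫ x in (0:ℝ)..(h/2), ((0:ℝ)*x+1) * f (-2*x+h) := by
    apply integral_congr
    intro x hx
    rw [uIcc_of_le (by linarith : (0:ℝ) ≤ h/2)] at hx
    obtain ⟨hxa, hxb⟩ := hx
    show f (liftW h x) = (0*x+1) * f (-2*x+h)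
    rw [liftW_eq1 hxa (by linarith), show (-2*x+(1+h):ℝ) = (-2*x+h) + 1 from by ring, hp]
    ring
  have p2 : (∫ x in (h/2)..(1/2:ℝ), f (liftW h x)) =
      ∫ x in (h/2)..(1/2:ℝ), ((0:ℝ)*x+1) * f (-2*x+(1+h)) := by
    apply intervalIntegral.integral_congr_ae
    filter_upwards [ae_ne (1/2:ℝ)] with x hne hx
    rw [uIoc_of_le (by linarith : h/2 ≤ (1/2:ℝ))] at hx
    obtain ⟨hxa, hxb⟩ := hx
    rw [liftW_eq1 (by linarith) (lt_of_le_of_ne hxb hne)]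
    ring
  have p3 : (∫ x in (1/2:ℝ)..(1-h/2), f (liftW h x)) =
      ∫ x in (1/2:ℝ)..(1-h/2), ((0:ℝ)*x+1) * f (-2*x+(2-h)) := by
    apply intervalIntegral.integral_congr_ae
    filter_upwards [ae_ne (1:ℝ)] with x hne hx
    rw [uIoc_of_le (by linarith : (1/2:ℝ) ≤ 1-h/2)] at hx
    obtain ⟨hxa, hxb⟩ := hx
    have hx1 : x < 1 := lt_of_le_of_ne (by linarith) hne
    rw [liftW_eq2 (by linarith) hx1]
    ring
  have p4 : (∫ x in (1-h/2)..(1:ℝ), f (liftW h x)) =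
      ∫ x in (1-h/2)..(1:ℝ), ((0:ℝ)*x+1) * f (-2*x+(3-h)) := by
    apply intervalIntegral.integral_congr_ae
    filter_upwards [ae_ne (1:ℝ)] with x hne hx
    rw [uIoc_of_le (by linarith : (1-h/2:ℝ) ≤ 1)] at hx
    obtain ⟨hxa, hxb⟩ := hx
    have hx1 : x < 1 := lt_of_le_of_ne hxb hne
    rw [liftW_eq2 (by linarith) hx1,
      show (-2*x+(3-h):ℝ) = (-2*x+(2-h)) + 1 from by ring, hp]
    ring
  rw [split, p1, p2, p3, p4, master f 0 1 0 (h/2) h, master f 0 1 (h/2) (1/2) (1+h),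
    master f 0 1 (1/2) (1-h/2) (2-h), master f 0 1 (1-h/2) 1 (3-h),
    show (-2*(h/2)+h:ℝ) = 0 from by ring, show (-2*(0:ℝ)+h) = h from by ring,
    show (-2*(1/2)+(1+h):ℝ) = h from by ring, show (-2*(h/2)+(1+h):ℝ) = 1 from by ring,
    show (-2*(1-h/2)+(2-h):ℝ) = 0 from by ring, show (-2*(1/2)+(2-h):ℝ) = 1-h from by ring,
    show (-2*(1:ℝ)+(3-h)) = 1-h from by ring, show (-2*(1-h/2)+(3-h):ℝ) = 1 from by ring,
    Lsplit hm hC (-0/2) (0*h/2+1) (by linarith) (by linarith) (by linarith) (by linarith),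
    Lsplit hm hC (-0/2) (0*(1+h)/2+1) (by linarith) (by linarith) (by linarith) (by linarith),
    Lsplit hm hC (-0/2) (0*(2-h)/2+1) (by linarith) (by linarith) (by linarith) (by linarith),
    Lsplit hm hC (-0/2) (0*(3-h)/2+1) (by linarith) (by linarith) (by linarith) (by linarith)]
  have jsplit : (∫ y in (h:ℝ)..1, f y) = (∫ y in (h:ℝ)..(1-h), f y) + ∫ y in (1-h:ℝ)..1, f y :=
    (integral_add_adjacent_intervals (IIg hm hC _ _) (IIg hm hC _ _)).symm
  have ksplit : (∫ y in (h:ℝ)..1, y * f y) =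
      (∫ y in (h:ℝ)..(1-h), y * f y) + ∫ y in (1-h:ℝ)..1, y * f y :=
    (integral_add_adjacent_intervals
      (IIid hm hC (by linarith) (by linarith) (by linarith) (by linarith))
      (IIid hm hC (by linarith) (by linarith) (by linarith) (by linarith))).symm
  have jsplit2 : (∫ y in (0:ℝ)..(1-h), f y) = (∫ y in (0:ℝ)..h, f y) + ∫ y in (h:ℝ)..(1-h), f y :=
    (integral_add_adjacent_intervals (IIg hm hC _ _) (IIg hm hC _ _)).symm
  have ksplit2 : (∫ y in (0:ℝ)..(1-h), y * f y) =
      (∫ y in (0:ℝ)..h, y * f y) + ∫ y in (h:ℝ)..(1-h), y * f y :=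
    (integral_add_adjacent_intervals
      (IIid hm hC (by linarith) (by linarith) (by linarith) (by linarith))
      (IIid hm hC (by linarith) (by linarith) (by linarith) (by linarith))).symm
  have jall : (∫ y in (0:ℝ)..1, f y) = ((∫ y in (0:ℝ)..h, f y) + ∫ y in (h:ℝ)..(1-h), f y) +
      ∫ y in (1-h:ℝ)..1, f y := by
    rw [integral_add_adjacent_intervals (IIg hm hC _ _) (IIg hm hC _ _),
      integral_add_adjacent_intervals (IIg hm hC _ _) (IIg hm hC _ _)]
  rw [jsplit, ksplit, jsplit2, ksplit2, jall]
  ring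

lemma Pint (h0 : 0 ≤ h) (h2 : h ≤ 1/2) {f : ℝ → ℝ} (hm : Measurable f) {C : ℝ}
    (hC : ∀ x, |f x| ≤ C) :
    (∫ x in (0:ℝ)..1, P h x * f x) =
      (3/2 * (∫ y in (0:ℝ)..h, y * f y) + 0 * ∫ y in (0:ℝ)..h, f y) +
      (3/2 * (∫ y in (h:ℝ)..(1-h), y * f y) + (-3/4) * ∫ y in (h:ℝ)..(1-h), f y) +
      (3/2 * (∫ y in (1-h:ℝ)..1, y * f y) + (-3/2) * ∫ y in (1-h:ℝ)..1, f y) := by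
  have hPf : Measurable fun x => P h x * f x := (measurable_P h).mul hm
  have hPC : ∀ x, |P h x * f x| ≤ 2 * C := fun x => by
    rw [abs_mul]
    exact mul_le_mul (P_bound h0 h2 x) (hC x) (abs_nonneg _) (by norm_num)
  have split : (∫ x in (0:ℝ)..1, P h x * f x) =
      (∫ x in (0:ℝ)..h, P h x * f x) + (∫ x in (h:ℝ)..(1-h), P h x * f x) +
      ∫ x in (1-h:ℝ)..1, P h x * f x := by
    rw [integral_add_adjacent_intervals (IIg hPf hPC _ _) (IIg hPf hPC _ _),
        integral_add_adjacent_intervals (IIg hPf hPC _ _) (IIg hPf hPC _ _)]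
  have p1 : (∫ x in (0:ℝ)..h, P h x * f x) = ∫ x in (0:ℝ)..h, ((3/2:ℝ)*x+0) * f x := by
    apply intervalIntegral.integral_congr_ae
    filter_upwards [ae_ne (h:ℝ)] with x hne hx
    rw [uIoc_of_le h0] at hx
    obtain ⟨hxa, hxb⟩ := hx
    rw [P_eq1 (le_of_lt hxa) (lt_of_le_of_ne hxb hne) (by linarith)]
    ring
  have p2 : (∫ x in (h:ℝ)..(1-h), P h x * f x) = ∫ x in (h:ℝ)..(1-h), ((3/2:ℝ)*x+(-3/4)) * f x := by
    apply intervalIntegral.integral_congr_ae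
    filter_upwards [ae_ne (1:ℝ)] with x hne hx
    rw [uIoc_of_le (by linarith : (h:ℝ) ≤ 1-h)] at hx
    obtain ⟨hxa, hxb⟩ := hx
    have hx1 : x < 1 := lt_of_le_of_ne (by linarith) hne
    rw [P_eq2 (by linarith) (le_of_lt hxa) hxb hx1]
    ring
  have p3 : (∫ x in (1-h:ℝ)..1, P h x * f x) = ∫ x in (1-h:ℝ)..1, ((3/2:ℝ)*x+(-3/2)) * f x := by
    apply intervalIntegral.integral_congr_ae
    filter_upwards [ae_ne (1:ℝ)] with x hne hx
    rw [uIoc_of_le (by linarith : (1-h:ℝ) ≤ 1)] at hx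
    obtain ⟨hxa, hxb⟩ := hx
    have hx1 : x < 1 := lt_of_le_of_ne hxb hne
    rw [P_eq3 hxa hx1 h2]
    ring
  rw [split, p1, p2, p3,
    Lsplit hm hC (3/2) 0 (by linarith) (by linarith) (by linarith) (by linarith),
    Lsplit hm hC (3/2) (-3/4) (by linarith) (by linarith) (by linarith) (by linarith),
    Lsplit hm hC (3/2) (-3/2) (by linarith) (by linarith) (by linarith) (by linarith)]

lemma T2 (h0 : 0 ≤ h) (h2 : h ≤ 1/2) {f : ℝ → ℝ} (hm : Measurable f) {C : ℝ}
    (hC : ∀ x, |f x| ≤ C) (hp : ∀ x, f (x + 1) = f x) :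
    (∫ x in (0:ℝ)..1, (liftW h x - x) * f (liftW h x)) = ∫ x in (0:ℝ)..1, P h x * f x := by
  have hC0 : 0 ≤ C := le_trans (abs_nonneg _) (hC 0)
  have hfW : Measurable fun x => (liftW h x - x) * f (liftW h x) :=
    ((measurable_liftW h).sub measurable_id).mul (hm.comp (measurable_liftW h))
  have hWC : ∀ x, |(liftW h x - x) * f (liftW h x)| ≤ 2 * C := fun x => by
    rw [abs_mul]
    exact mul_le_mul (g_bound h0 h2 x) (hC _) (abs_nonneg _) (by norm_num)
  have split : (∫ x in (0:ℝ)..1, (liftW h x - x) * f (liftW h x)) =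
      (∫ x in (0:ℝ)..(h/2), (liftW h x - x) * f (liftW h x)) +
      (∫ x in (h/2)..(1/2:ℝ), (liftW h x - x) * f (liftW h x)) +
      ((∫ x in (1/2:ℝ)..(1-h/2), (liftW h x - x) * f (liftW h x)) +
       ∫ x in (1-h/2)..(1:ℝ), (liftW h x - x) * f (liftW h x)) := by
    rw [integral_add_adjacent_intervals (IIg hfW hWC _ _) (IIg hfW hWC _ _),
        integral_add_adjacent_intervals (IIg hfW hWC _ _) (IIg hfW hWC _ _),
        integral_add_adjacent_intervals (IIg hfW hWC _ _) (IIg hfW hWC _ _)]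
  have p1 : (∫ x in (0:ℝ)..(h/2), (liftW h x - x) * f (liftW h x)) =
      ∫ x in (0:ℝ)..(h/2), ((-3:ℝ)*x+(1+h)) * f (-2*x+h) := by
    apply integral_congr
    intro x hx
    rw [uIcc_of_le (by linarith : (0:ℝ) ≤ h/2)] at hx
    obtain ⟨hxa, hxb⟩ := hx
    show (liftW h x - x) * f (liftW h x) = (-3*x+(1+h)) * f (-2*x+h)
    rw [liftW_eq1 hxa (by linarith), show (-2*x+(1+h):ℝ) = (-2*x+h) + 1 from by ring, hp]
    ring
  have p2 : (∫ x in (h/2)..(1/2:ℝ), (liftW h x - x) * f (liftW h x)) =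
      ∫ x in (h/2)..(1/2:ℝ), ((-3:ℝ)*x+(1+h)) * f (-2*x+(1+h)) := by
    apply intervalIntegral.integral_congr_ae
    filter_upwards [ae_ne (1/2:ℝ)] with x hne hx
    rw [uIoc_of_le (by linarith : h/2 ≤ (1/2:ℝ))] at hx
    obtain ⟨hxa, hxb⟩ := hx
    rw [liftW_eq1 (by linarith) (lt_of_le_of_ne hxb hne)]
    ring
  have p3 : (∫ x in (1/2:ℝ)..(1-h/2), (liftW h x - x) * f (liftW h x)) =
      ∫ x in (1/2:ℝ)..(1-h/2), ((-3:ℝ)*x+(2-h)) * f (-2*x+(2-h)) := by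
    apply intervalIntegral.integral_congr_ae
    filter_upwards [ae_ne (1:ℝ)] with x hne hx
    rw [uIoc_of_le (by linarith : (1/2:ℝ) ≤ 1-h/2)] at hx
    obtain ⟨hxa, hxb⟩ := hx
    have hx1 : x < 1 := lt_of_le_of_ne (by linarith) hne
    rw [liftW_eq2 (by linarith) hx1]
    ring
  have p4 : (∫ x in (1-h/2)..(1:ℝ), (liftW h x - x) * f (liftW h x)) =
      ∫ x in (1-h/2)..(1:ℝ), ((-3:ℝ)*x+(2-h)) * f (-2*x+(3-h)) := by
    apply intervalIntegral.integral_congr_ae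
    filter_upwards [ae_ne (1:ℝ)] with x hne hx
    rw [uIoc_of_le (by linarith : (1-h/2:ℝ) ≤ 1)] at hx
    obtain ⟨hxa, hxb⟩ := hx
    have hx1 : x < 1 := lt_of_le_of_ne hxb hne
    rw [liftW_eq2 (by linarith) hx1,
      show (-2*x+(3-h):ℝ) = (-2*x+(2-h)) + 1 from by ring, hp]
    ring
  rw [split, p1, p2, p3, p4, master f (-3) (1+h) 0 (h/2) h, master f (-3) (1+h) (h/2) (1/2) (1+h),
    master f (-3) (2-h) (1/2) (1-h/2) (2-h), master f (-3) (2-h) (1-h/2) 1 (3-h),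
    show (-2*(h/2)+h:ℝ) = 0 from by ring, show (-2*(0:ℝ)+h) = h from by ring,
    show (-2*(1/2)+(1+h):ℝ) = h from by ring, show (-2*(h/2)+(1+h):ℝ) = 1 from by ring,
    show (-2*(1-h/2)+(2-h):ℝ) = 0 from by ring, show (-2*(1/2)+(2-h):ℝ) = 1-h from by ring,
    show (-2*(1:ℝ)+(3-h)) = 1-h from by ring, show (-2*(1-h/2)+(3-h):ℝ) = 1 from by ring,
    Lsplit hm hC (-(-3)/2) ((-3)*h/2+(1+h)) (by linarith) (by linarith) (by linarith) (by linarith),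
    Lsplit hm hC (-(-3)/2) ((-3)*(1+h)/2+(1+h)) (by linarith) (by linarith) (by linarith) (by linarith),
    Lsplit hm hC (-(-3)/2) ((-3)*(2-h)/2+(2-h)) (by linarith) (by linarith) (by linarith) (by linarith),
    Lsplit hm hC (-(-3)/2) ((-3)*(3-h)/2+(2-h)) (by linarith) (by linarith) (by linarith) (by linarith),
    Pint h0 h2 hm hC]
  have jsplit : (∫ y in (h:ℝ)..1, f y) = (∫ y in (h:ℝ)..(1-h), f y) + ∫ y in (1-h:ℝ)..1, f y :=
    (integral_add_adjacent_intervals (IIg hm hC _ _) (IIg hm hC _ _)).symm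
  have ksplit : (∫ y in (h:ℝ)..1, y * f y) =
      (∫ y in (h:ℝ)..(1-h), y * f y) + ∫ y in (1-h:ℝ)..1, y * f y :=
    (integral_add_adjacent_intervals
      (IIid hm hC (by linarith) (by linarith) (by linarith) (by linarith))
      (IIid hm hC (by linarith) (by linarith) (by linarith) (by linarith))).symm
  have jsplit2 : (∫ y in (0:ℝ)..(1-h), f y) = (∫ y in (0:ℝ)..h, f y) + ∫ y in (h:ℝ)..(1-h), f y :=
    (integral_add_adjacent_intervals (IIg hm hC _ _) (IIg hm hC _ _)).symm
  have ksplit2 : (∫ y in (0:ℝ)..(1-h), y * f y) =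
      (∫ y in (0:ℝ)..h, y * f y) + ∫ y in (h:ℝ)..(1-h), y * f y :=
    (integral_add_adjacent_intervals
      (IIid hm hC (by linarith) (by linarith) (by linarith) (by linarith))
      (IIid hm hC (by linarith) (by linarith) (by linarith) (by linarith))).symm
  rw [jsplit, ksplit, jsplit2, ksplit2]
  ring

lemma T3 (h0 : 0 ≤ h) (h2 : h ≤ 1/2) {f : ℝ → ℝ} (hm : Measurable f) {C : ℝ}
    (hC : ∀ x, |f x| ≤ C) (hp : ∀ x, f (x + 1) = f x) :
    (∫ x in (0:ℝ)..1, P h x * f (liftW h x)) = -(1/2) * ∫ x in (0:ℝ)..1, P h x * f x := by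
  have hC0 : 0 ≤ C := le_trans (abs_nonneg _) (hC 0)
  have hfW : Measurable fun x => P h x * f (liftW h x) :=
    (measurable_P h).mul (hm.comp (measurable_liftW h))
  have hWC : ∀ x, |P h x * f (liftW h x)| ≤ 2 * C := fun x => by
    rw [abs_mul]
    exact mul_le_mul (P_bound h0 h2 x) (hC _) (abs_nonneg _) (by norm_num)
  have split : (∫ x in (0:ℝ)..1, P h x * f (liftW h x)) =
      ((∫ x in (0:ℝ)..(h/2), P h x * f (liftW h x)) +
       (∫ x in (h/2)..(h:ℝ), P h x * f (liftW h x))) +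
      ((∫ x in (h:ℝ)..(1/2:ℝ), P h x * f (liftW h x)) +
       (∫ x in (1/2:ℝ)..(1-h), P h x * f (liftW h x))) +
      ((∫ x in (1-h:ℝ)..(1-h/2), P h x * f (liftW h x)) +
       ∫ x in (1-h/2)..(1:ℝ), P h x * f (liftW h x)) := by
    rw [integral_add_adjacent_intervals (IIg hfW hWC _ _) (IIg hfW hWC _ _),
        integral_add_adjacent_intervals (IIg hfW hWC _ _) (IIg hfW hWC _ _),
        integral_add_adjacent_intervals (IIg hfW hWC _ _) (IIg hfW hWC _ _),
        integral_add_adjacent_intervals (IIg hfW hWC _ _) (IIg hfW hWC _ _),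
        integral_add_adjacent_intervals (IIg hfW hWC _ _) (IIg hfW hWC _ _)]
  have q1 : (∫ x in (0:ℝ)..(h/2), P h x * f (liftW h x)) =
      ∫ x in (0:ℝ)..(h/2), ((3/2:ℝ)*x+0) * f (-2*x+h) := by
    apply intervalIntegral.integral_congr_ae
    filter_upwards [] with x hx
    rw [uIoc_of_le (by linarith : (0:ℝ) ≤ h/2)] at hx
    obtain ⟨hxa, hxb⟩ := hx
    have hh : 0 < h := by linarith
    rw [P_eq1 (le_of_lt hxa) (by linarith) (by linarith),
      liftW_eq1 (le_of_lt hxa) (by linarith),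
      show (-2*x+(1+h):ℝ) = (-2*x+h) + 1 from by ring, hp]
    ring
  have q2 : (∫ x in (h/2)..(h:ℝ), P h x * f (liftW h x)) =
      ∫ x in (h/2)..(h:ℝ), ((3/2:ℝ)*x+0) * f (-2*x+(1+h)) := by
    apply intervalIntegral.integral_congr_ae
    filter_upwards [ae_ne (h:ℝ)] with x hne hx
    rw [uIoc_of_le (by linarith : h/2 ≤ (h:ℝ))] at hx
    obtain ⟨hxa, hxb⟩ := hx
    have hxh : x < h := lt_of_le_of_ne hxb hne
    rw [P_eq1 (by linarith) hxh (by linarith), liftW_eq1 (by linarith) (by linarith)]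
    ring
  have q3 : (∫ x in (h:ℝ)..(1/2:ℝ), P h x * f (liftW h x)) =
      ∫ x in (h:ℝ)..(1/2:ℝ), ((3/2:ℝ)*x+(-3/4)) * f (-2*x+(1+h)) := by
    apply intervalIntegral.integral_congr_ae
    filter_upwards [ae_ne (1/2:ℝ)] with x hne hx
    rw [uIoc_of_le (by linarith : (h:ℝ) ≤ 1/2)] at hx
    obtain ⟨hxa, hxb⟩ := hx
    have hx5 : x < 1/2 := lt_of_le_of_ne hxb hne
    rw [P_eq2 (by linarith) (le_of_lt hxa) (by linarith) (by linarith),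
      liftW_eq1 (by linarith) hx5]
    ring
  have q4 : (∫ x in (1/2:ℝ)..(1-h), P h x * f (liftW h x)) =
      ∫ x in (1/2:ℝ)..(1-h), ((3/2:ℝ)*x+(-3/4)) * f (-2*x+(2-h)) := by
    apply intervalIntegral.integral_congr_ae
    filter_upwards [ae_ne (1:ℝ)] with x hne hx
    rw [uIoc_of_le (by linarith : (1/2:ℝ) ≤ 1-h)] at hx
    obtain ⟨hxa, hxb⟩ := hx
    have hx1 : x < 1 := lt_of_le_of_ne (by linarith) hne
    rw [P_eq2 (by linarith) (by linarith) hxb hx1, liftW_eq2 (by linarith) hx1]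
    ring
  have q5 : (∫ x in (1-h:ℝ)..(1-h/2), P h x * f (liftW h x)) =
      ∫ x in (1-h:ℝ)..(1-h/2), ((3/2:ℝ)*x+(-3/2)) * f (-2*x+(2-h)) := by
    apply intervalIntegral.integral_congr_ae
    filter_upwards [] with x hx
    rw [uIoc_of_le (by linarith : (1-h:ℝ) ≤ 1-h/2)] at hx
    obtain ⟨hxa, hxb⟩ := hx
    have hx1 : x < 1 := by linarith
    rw [P_eq3 hxa hx1 h2, liftW_eq2 (by linarith) hx1]
    ring
  have q6 : (∫ x in (1-h/2)..(1:ℝ), P h x * f (liftW h x)) =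
      ∫ x in (1-h/2)..(1:ℝ), ((3/2:ℝ)*x+(-3/2)) * f (-2*x+(3-h)) := by
    apply intervalIntegral.integral_congr_ae
    filter_upwards [ae_ne (1:ℝ)] with x hne hx
    rw [uIoc_of_le (by linarith : (1-h/2:ℝ) ≤ 1)] at hx
    obtain ⟨hxa, hxb⟩ := hx
    have hx1 : x < 1 := lt_of_le_of_ne hxb hne
    rw [P_eq3 (by linarith) hx1 h2, liftW_eq2 (by linarith) hx1,
      show (-2*x+(3-h):ℝ) = (-2*x+(2-h)) + 1 from by ring, hp]
    ring
  rw [split, q1, q2, q3, q4, q5, q6,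
    master f (3/2) 0 0 (h/2) h, master f (3/2) 0 (h/2) h (1+h),
    master f (3/2) (-3/4) h (1/2) (1+h), master f (3/2) (-3/4) (1/2) (1-h) (2-h),
    master f (3/2) (-3/2) (1-h) (1-h/2) (2-h), master f (3/2) (-3/2) (1-h/2) 1 (3-h),
    show (-2*(h/2)+h:ℝ) = 0 from by ring, show (-2*(0:ℝ)+h) = h from by ring,
    show (-2*h+(1+h):ℝ) = 1-h from by ring, show (-2*(h/2)+(1+h):ℝ) = 1 from by ring,
    show (-2*(1/2)+(1+h):ℝ) = h from by ring,
    show (-2*(1-h)+(2-h):ℝ) = h from by ring, show (-2*(1/2)+(2-h):ℝ) = 1-h from by ring,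
    show (-2*(1-h/2)+(2-h):ℝ) = 0 from by ring,
    show (-2*(1:ℝ)+(3-h)) = 1-h from by ring, show (-2*(1-h/2)+(3-h):ℝ) = 1 from by ring,
    Lsplit hm hC (-(3/2)/2) ((3/2)*h/2+0) (by linarith) (by linarith) (by linarith) (by linarith),
    Lsplit hm hC (-(3/2)/2) ((3/2)*(1+h)/2+0) (by linarith) (by linarith) (by linarith) (by linarith),
    Lsplit hm hC (-(3/2)/2) ((3/2)*(1+h)/2+(-3/4)) (by linarith) (by linarith) (by linarith) (by linarith),
    Lsplit hm hC (-(3/2)/2) ((3/2)*(2-h)/2+(-3/4)) (by linarith) (by linarith) (by linarith) (by linarith),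
    Lsplit hm hC (-(3/2)/2) ((3/2)*(2-h)/2+(-3/2)) (by linarith) (by linarith) (by linarith) (by linarith),
    Lsplit hm hC (-(3/2)/2) ((3/2)*(3-h)/2+(-3/2)) (by linarith) (by linarith) (by linarith) (by linarith),
    Pint h0 h2 hm hC]
  ring

lemma lemG (h0 : 0 ≤ h) (h2 : h ≤ 1/2) :
    (∫ x in (0:ℝ)..1, (liftW h x - x)^2) = 1/4 + h/2 + h^2 := by
  have hgm : Measurable fun x => (liftW h x - x)^2 :=
    ((measurable_liftW h).sub measurable_id).pow_const 2
  have hgb : ∀ x, |(liftW h x - x)^2| ≤ 4 := fun x => by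
    have := g_bound h0 h2 x
    rw [abs_pow]
    nlinarith [abs_nonneg (liftW h x - x)]
  have split : (∫ x in (0:ℝ)..1, (liftW h x - x)^2) =
      (∫ x in (0:ℝ)..(1/2:ℝ), (liftW h x - x)^2) + ∫ x in (1/2:ℝ)..1, (liftW h x - x)^2 :=
    (integral_add_adjacent_intervals (IIg hgm hgb _ _) (IIg hgm hgb _ _)).symm
  have p1 : (∫ x in (0:ℝ)..(1/2:ℝ), (liftW h x - x)^2) =
      ∫ x in (0:ℝ)..(1/2:ℝ), ((9:ℝ)*x^2 + (-6*(1+h))*x + (1+h)^2) := by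
    apply intervalIntegral.integral_congr_ae
    filter_upwards [ae_ne (1/2:ℝ)] with x hne hx
    rw [uIoc_of_le (by norm_num : (0:ℝ) ≤ 1/2)] at hx
    obtain ⟨hxa, hxb⟩ := hx
    rw [liftW_eq1 (le_of_lt hxa) (lt_of_le_of_ne hxb hne)]
    ring
  have p2 : (∫ x in (1/2:ℝ)..1, (liftW h x - x)^2) =
      ∫ x in (1/2:ℝ)..1, ((9:ℝ)*x^2 + (-6*(2-h))*x + (2-h)^2) := by
    apply intervalIntegral.integral_congr_ae
    filter_upwards [ae_ne (1:ℝ)] with x hne hx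
    rw [uIoc_of_le (by norm_num : (1/2:ℝ) ≤ 1)] at hx
    obtain ⟨hxa, hxb⟩ := hx
    rw [liftW_eq2 (le_of_lt hxa) (lt_of_le_of_ne hxb hne)]
    ring
  rw [split, p1, p2, intpoly, intpoly]
  ring

lemma lemB (h0 : 0 ≤ h) (h2 : h ≤ 1/2) :
    (∫ x in (0:ℝ)..1, P h x * (liftW h x - x)) = -3/16 + 9/8*h - 3/4*h^2 := by
  have hgm : Measurable fun x => P h x * (liftW h x - x) :=
    (measurable_P h).mul ((measurable_liftW h).sub measurable_id)
  have hgb : ∀ x, |P h x * (liftW h x - x)| ≤ 4 := fun x => by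
    rw [abs_mul]
    calc |P h x| * |liftW h x - x| ≤ 2 * 2 :=
          mul_le_mul (P_bound h0 h2 x) (g_bound h0 h2 x) (abs_nonneg _) (by norm_num)
      _ = 4 := by norm_num
  have split : (∫ x in (0:ℝ)..1, P h x * (liftW h x - x)) =
      ((∫ x in (0:ℝ)..(h:ℝ), P h x * (liftW h x - x)) +
       (∫ x in (h:ℝ)..(1/2:ℝ), P h x * (liftW h x - x))) +
      ((∫ x in (1/2:ℝ)..(1-h), P h x * (liftW h x - x)) +
       ∫ x in (1-h:ℝ)..1, P h x * (liftW h x - x)) := by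
    rw [integral_add_adjacent_intervals (IIg hgm hgb _ _) (IIg hgm hgb _ _),
        integral_add_adjacent_intervals (IIg hgm hgb _ _) (IIg hgm hgb _ _),
        integral_add_adjacent_intervals (IIg hgm hgb _ _) (IIg hgm hgb _ _)]
  have p1 : (∫ x in (0:ℝ)..(h:ℝ), P h x * (liftW h x - x)) =
      ∫ x in (0:ℝ)..(h:ℝ), ((-9/2:ℝ)*x^2 + (3/2*(1+h))*x + 0) := by
    apply intervalIntegral.integral_congr_ae
    filter_upwards [ae_ne (h:ℝ)] with x hne hx
    rw [uIoc_of_le h0] at hx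
    obtain ⟨hxa, hxb⟩ := hx
    have hxh : x < h := lt_of_le_of_ne hxb hne
    rw [P_eq1 (le_of_lt hxa) hxh (by linarith),
      liftW_eq1 (le_of_lt hxa) (by linarith)]
    ring
  have p2 : (∫ x in (h:ℝ)..(1/2:ℝ), P h x * (liftW h x - x)) =
      ∫ x in (h:ℝ)..(1/2:ℝ), ((-9/2:ℝ)*x^2 + (3/2*(1+h)+9/4)*x + (-3/4*(1+h))) := by
    apply intervalIntegral.integral_congr_ae
    filter_upwards [ae_ne (1/2:ℝ)] with x hne hx
    rw [uIoc_of_le (by linarith : (h:ℝ) ≤ 1/2)] at hx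
    obtain ⟨hxa, hxb⟩ := hx
    have hx5 : x < 1/2 := lt_of_le_of_ne hxb hne
    rw [P_eq2 (by linarith) (le_of_lt hxa) (by linarith) (by linarith),
      liftW_eq1 (by linarith) hx5]
    ring
  have p3 : (∫ x in (1/2:ℝ)..(1-h), P h x * (liftW h x - x)) =
      ∫ x in (1/2:ℝ)..(1-h), ((-9/2:ℝ)*x^2 + (3/2*(2-h)+9/4)*x + (-3/4*(2-h))) := by
    apply intervalIntegral.integral_congr_ae
    filter_upwards [ae_ne (1:ℝ)] with x hne hx
    rw [uIoc_of_le (by linarith : (1/2:ℝ) ≤ 1-h)] at hx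
    obtain ⟨hxa, hxb⟩ := hx
    have hx1 : x < 1 := lt_of_le_of_ne (by linarith) hne
    rw [P_eq2 (by linarith) (by linarith) hxb hx1, liftW_eq2 (by linarith) hx1]
    ring
  have p4 : (∫ x in (1-h:ℝ)..1, P h x * (liftW h x - x)) =
      ∫ x in (1-h:ℝ)..1, ((-9/2:ℝ)*x^2 + (3/2*(2-h)+9/2)*x + (-3/2*(2-h))) := by
    apply intervalIntegral.integral_congr_ae
    filter_upwards [ae_ne (1:ℝ)] with x hne hx
    rw [uIoc_of_le (by linarith : (1-h:ℝ) ≤ 1)] at hx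
    obtain ⟨hxa, hxb⟩ := hx
    have hx1 : x < 1 := lt_of_le_of_ne hxb hne
    rw [P_eq3 hxa hx1 h2, liftW_eq2 (by linarith) hx1]
    ring
  rw [split, p1, p2, p3, p4, intpoly, intpoly, intpoly, intpoly]
  ring

noncomputable def In (h : ℝ) (n : ℕ) : ℝ := ∫ x in (0:ℝ)..1, (S h n x)^2

noncomputable def An (h : ℝ) (n : ℕ) : ℝ := ∫ x in (0:ℝ)..1, P h x * S h n x

lemma lemIrec (h0 : 0 ≤ h) (h2 : h ≤ 1/2) (n : ℕ) :
    In h (n+1) = (1/4 + h/2 + h^2) + 2 * An h n + In h n := by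
  have hSm := measurable_S (h := h) n
  have hSb := S_bound h0 h2 n
  have hgm : Measurable fun x => (liftW h x - x)^2 :=
    ((measurable_liftW h).sub measurable_id).pow_const 2
  have hgb : ∀ x, |(liftW h x - x)^2| ≤ 4 := fun x => by
    have := g_bound h0 h2 x
    rw [abs_pow]
    nlinarith [abs_nonneg (liftW h x - x)]
  have hcm : Measurable fun x => (liftW h x - x) * S h n (liftW h x) :=
    ((measurable_liftW h).sub measurable_id).mul (hSm.comp (measurable_liftW h))
  have hcb : ∀ x, |(liftW h x - x) * S h n (liftW h x)| ≤ 2 * (2*n) := fun x => by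
    rw [abs_mul]
    exact mul_le_mul (g_bound h0 h2 x) (hSb _) (abs_nonneg _) (by norm_num)
  have hqm : Measurable fun x => (S h n (liftW h x))^2 :=
    (hSm.comp (measurable_liftW h)).pow_const 2
  have hqb : ∀ x, |(S h n (liftW h x))^2| ≤ (2*n)^2 := fun x => by
    rw [abs_pow]
    have := hSb (liftW h x)
    have h0' := abs_nonneg (S h n (liftW h x))
    nlinarith
  have e1 : In h (n+1) = ∫ x in (0:ℝ)..1,
      ((liftW h x - x)^2 + (2 * ((liftW h x - x) * S h n (liftW h x)) +
        (S h n (liftW h x))^2)) := by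
    unfold In
    apply integral_congr
    intro x _
    show S h (n+1) x ^ 2 = _
    rw [S_succ]
    ring
  have hsum : IntervalIntegrable (fun x => 2 * ((liftW h x - x) * S h n (liftW h x)) +
      (S h n (liftW h x))^2) volume 0 1 :=
    ((IIg hcm hcb 0 1).const_mul 2).add (IIg hqm hqb 0 1)
  have hT2 := T2 h0 h2 hSm (C := 2*n) hSb (S_add_one n)
  have hT1 := T1 h0 h2 (f := fun y => (S h n y)^2) (hSm.pow_const 2)
    (C := (2*n)^2) (fun x => by
      rw [abs_pow]
      have := hSb x
      have := abs_nonneg (S h n x)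
      nlinarith)
    (fun x => by show S h n (x+1) ^ 2 = S h n x ^ 2; rw [S_add_one])
  rw [e1, integral_add (IIg hgm hgb 0 1) hsum,
    integral_add ((IIg hcm hcb 0 1).const_mul 2) (IIg hqm hqb 0 1),
    intervalIntegral.integral_const_mul, lemG h0 h2, hT2, hT1]
  unfold An In
  ring

lemma lemArec (h0 : 0 ≤ h) (h2 : h ≤ 1/2) (n : ℕ) :
    An h (n+1) = (-3/16 + 9/8*h - 3/4*h^2) + (-(1/2)) * An h n := by
  have hSm := measurable_S (h := h) n
  have hSb := S_bound h0 h2 n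
  have hgm : Measurable fun x => P h x * (liftW h x - x) :=
    (measurable_P h).mul ((measurable_liftW h).sub measurable_id)
  have hgb : ∀ x, |P h x * (liftW h x - x)| ≤ 4 := fun x => by
    rw [abs_mul]
    calc |P h x| * |liftW h x - x| ≤ 2 * 2 :=
          mul_le_mul (P_bound h0 h2 x) (g_bound h0 h2 x) (abs_nonneg _) (by norm_num)
      _ = 4 := by norm_num
  have hcm : Measurable fun x => P h x * S h n (liftW h x) :=
    (measurable_P h).mul (hSm.comp (measurable_liftW h))
  have hcb : ∀ x, |P h x * S h n (liftW h x)| ≤ 2 * (2*n) := fun x => by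
    rw [abs_mul]
    exact mul_le_mul (P_bound h0 h2 x) (hSb _) (abs_nonneg _) (by norm_num)
  have e1 : An h (n+1) = ∫ x in (0:ℝ)..1,
      (P h x * (liftW h x - x) + P h x * S h n (liftW h x)) := by
    unfold An
    apply integral_congr
    intro x _
    show P h x * S h (n+1) x = _
    rw [S_succ]
    ring
  have hT3 := T3 h0 h2 hSm (C := 2*n) hSb (S_add_one n)
  rw [e1, integral_add (IIg hgm hgb 0 1) (IIg hcm hcb 0 1), lemB h0 h2, hT3]
  unfold An
  ring

lemma lemAn (h0 : 0 ≤ h) (h2 : h ≤ 1/2) (n : ℕ) :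
    An h n = 2*(-3/16 + 9/8*h - 3/4*h^2)/3 * (1 - (-(1/2):ℝ)^n) := by
  induction n with
  | zero =>
    have : An h 0 = 0 := by
      unfold An
      have : (∫ x in (0:ℝ)..1, P h x * S h 0 x) = ∫ x in (0:ℝ)..1, (0:ℝ) := by
        apply integral_congr
        intro x _
        show P h x * S h 0 x = 0
        simp [S]
      rw [this]
      simp
    rw [this]
    norm_num
  | succ n ih =>
    rw [lemArec h0 h2, ih]
    ring

lemma lemIn (h0 : 0 ≤ h) (h2 : h ≤ 1/2) (n : ℕ) :
    In h n = 2*n*h - (8*(-3/16 + 9/8*h - 3/4*h^2)/9) * (1 - (-(1/2):ℝ)^n) := by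
  induction n with
  | zero =>
    have : In h 0 = 0 := by
      unfold In
      have : (∫ x in (0:ℝ)..1, (S h 0 x)^2) = ∫ x in (0:ℝ)..1, (0:ℝ) := by
        apply integral_congr
        intro x _
        show S h 0 x ^ 2 = 0
        simp [S]
      rw [this]
      simp
    rw [this]
    norm_num
  | succ n ih =>
    rw [lemIrec h0 h2, lemAn h0 h2, ih]
    push_cast
    ring

end Bern

theorem stmt13 (h : ℝ) (hh : h ∈ Set.Icc (0:ℝ) (1/2)) :
    Tendsto (fun n : ℕ => (1/(2*(n:ℝ))) * ∫ x in (0:ℝ)..1, ((liftW h)^[n] x - x)^2)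
      atTop (nhds h) := by
  obtain ⟨h0, h2⟩ := hh
  set c : ℝ := 8*(-3/16 + 9/8*h - 3/4*h^2)/9 with hc
  have key : ∀ n : ℕ, (∫ x in (0:ℝ)..1, ((liftW h)^[n] x - x)^2) =
      2*n*h - c * (1 - (-(1/2):ℝ)^n) := fun n => Bern.lemIn h0 h2 n
  have hzero : Tendsto (fun n : ℕ => c * (1 - (-(1/2):ℝ)^n) / (2*n)) atTop (nhds 0) := by
    apply squeeze_zero_norm (a := fun n : ℕ => |c| / n)
    · intro n
      have hb : |1 - (-(1/2):ℝ)^n| ≤ 2 := by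
        have h1 : |(-(1/2):ℝ)^n| ≤ 1 := by
          rw [abs_pow, abs_neg, abs_of_nonneg (by norm_num : (0:ℝ) ≤ (1/2:ℝ))]
          apply pow_le_one₀ <;> norm_num
        calc |1 - (-(1/2):ℝ)^n| ≤ |(1:ℝ)| + |(-(1/2):ℝ)^n| := abs_sub _ _
          _ ≤ 2 := by rw [abs_one]; linarith
      rcases Nat.eq_zero_or_pos n with rfl | hn
      · simp
      · have hn' : (0:ℝ) < n := by exact_mod_cast hn
        rw [Real.norm_eq_abs, abs_div, abs_mul]
        rw [div_le_div_iff₀ (by positivity) hn']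
        have : |(2:ℝ) * n| = 2 * n := by
          rw [abs_of_nonneg]; positivity
        rw [this]
        nlinarith [mul_le_mul_of_nonneg_left hb (abs_nonneg c), hn', abs_nonneg c]
    · exact tendsto_const_div_atTop_nhds_zero_nat |c|
  have main : Tendsto (fun n : ℕ => h - c * (1 - (-(1/2):ℝ)^n) / (2*n)) atTop (nhds h) := by
    have := tendsto_const_nhds (x := h) (f := atTop (α := ℕ)).sub hzero
    simpa using this
  apply main.congr'
  filter_upwards [eventually_ge_atTop 1] with n hn
  have hn' : (n:ℝ) ≠ 0 := by
    have : (0:ℝ) < n := by exact_mod_cast hn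
    linarith
  rw [key n]
  field_simp
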